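/- Let α ∈ [0,1], 0 ≤ x < α < y ≤ 1, and 0 < w < u < 1 with x < w and u < y possible. Then ∫ over {(λ,ρ) : 0 ≤ λ < α < ρ ≤ 1} of (ρ-λ)^{-1} 1(λ < w < u < ρ) dν(λ,ρ) = [(α ∨ u) - (α ∧ w)]^{-1}, where ν(dλ,dρ) = δ_0(dλ)δ_1(dρ) + (1-λ)^{-1} dλ δ_1(dρ) + δ_0(dλ) ρ^{-1} dρ + 2(ρ-λ)^{-2} dλ dρ. -/

import Mathlib

open MeasureTheory Set
open scoped NNReal ENNReal

lemma intInt1 (c p q : ℝ) (hp : p < c) (hq : q < c) :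
    ∫ x in p..q, ((c - x) ^ 2)⁻¹ = (c - q)⁻¹ - (c - p)⁻¹ := by
  have hmax : max p q < c := max_lt hp hq
  have h : ∀ x ∈ Set.uIcc p q, HasDerivAt (fun y => (c - y)⁻¹) (((c - x) ^ 2)⁻¹) x := by
    intro x hx
    have hxc : c - x ≠ 0 := by
      have : x ≤ max p q := hx.2
      have : (0:ℝ) < c - x := by linarith
      linarith
    have h1 : HasDerivAt (fun y : ℝ => c - y) (-1) x := by
      simpa using (hasDerivAt_id x).const_sub c
    have h2 := h1.inv hxc
    convert h2 using 1
    all_goals first | rfl | (funext y; rfl) | field_simp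
  have hcont : IntervalIntegrable (fun x => ((c - x) ^ 2)⁻¹) volume p q := by
    apply ContinuousOn.intervalIntegrable
    apply ContinuousOn.inv₀ (((continuous_const.sub continuous_id).pow 2).continuousOn)
    intro x hx
    have : x ≤ max p q := hx.2
    have hcx : (0:ℝ) < c - x := by linarith
    simp only [Pi.pow_apply, Pi.sub_apply, id]; positivity
  exact intervalIntegral.integral_eq_sub_of_hasDerivAt h hcont

lemma intInt2 (p q : ℝ) (hp : 0 < p) (hq : 0 < q) :
    ∫ x in p..q, (x ^ 2)⁻¹ = p⁻¹ - q⁻¹ := by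
  have hmin : 0 < min p q := lt_min hp hq
  have h : ∀ x ∈ Set.uIcc p q, HasDerivAt (fun y : ℝ => -(y⁻¹)) ((x ^ 2)⁻¹) x := by
    intro x hx
    have hx0 : x ≠ 0 := by
      have : min p q ≤ x := hx.1
      have : (0:ℝ) < x := lt_of_lt_of_le hmin this
      linarith
    have h2 := ((hasDerivAt_id x).inv hx0).neg
    convert h2 using 1
    all_goals first | rfl | (funext y; rfl) | (simp only [id]; field_simp)
  have hcont : IntervalIntegrable (fun x : ℝ => (x ^ 2)⁻¹) volume p q := by
    apply ContinuousOn.intervalIntegrable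
    apply ContinuousOn.inv₀ ((continuous_id.pow 2).continuousOn)
    intro x hx
    have : min p q ≤ x := hx.1
    have hx0 : (0:ℝ) < x := lt_of_lt_of_le hmin this
    simp only [Pi.pow_apply, Pi.sub_apply, id]; positivity
  have := intervalIntegral.integral_eq_sub_of_hasDerivAt h hcont
  rw [this]; ring

lemma intInt3 (t p q : ℝ) (hp : t < p) (hq : t < q) :
    ∫ r in p..q, 2 * (((r - t) ^ 2)⁻¹ * (r - t)⁻¹) = ((p - t) ^ 2)⁻¹ - ((q - t) ^ 2)⁻¹ := by
  have hmin : t < min p q := lt_min hp hq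
  have h : ∀ r ∈ Set.uIcc p q,
      HasDerivAt (fun r : ℝ => -(((r - t) ^ 2)⁻¹)) (2 * (((r - t) ^ 2)⁻¹ * (r - t)⁻¹)) r := by
    intro r hr
    have hrt : (0:ℝ) < r - t := by
      have : min p q ≤ r := hr.1
      linarith
    have hne : (r - t) ^ 2 ≠ 0 := by positivity
    have h1 : HasDerivAt (fun r : ℝ => r - t) 1 r := (hasDerivAt_id r).sub_const t
    have h2 := ((h1.pow 2).inv hne).neg
    convert h2 using 1
    have : r - t ≠ 0 := ne_of_gt hrt
    all_goals try first | rfl | (funext y; rfl)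
    simp only [Pi.pow_apply]
    field_simp
    ring
  have hcont : IntervalIntegrable (fun r : ℝ => 2 * (((r - t) ^ 2)⁻¹ * (r - t)⁻¹)) volume p q := by
    apply ContinuousOn.intervalIntegrable
    have hc : ContinuousOn (fun r : ℝ => r - t) (Set.uIcc p q) :=
      (continuous_id.sub continuous_const).continuousOn
    have hne : ∀ r ∈ Set.uIcc p q, r - t ≠ 0 := by
      intro r hr
      have : min p q ≤ r := hr.1
      have : (0:ℝ) < r - t := by linarith
      linarith
    exact continuousOn_const.mul (((hc.pow 2).inv₀ fun r hr => pow_ne_zero 2 (hne r hr)).mul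
      (hc.inv₀ hne))
  have := intervalIntegral.integral_eq_sub_of_hasDerivAt h hcont
  rw [this]; ring

open scoped NNReal ENNReal


/-- Identity \eqref{partOfIntegralES}: for the explicit measure
`ν(dλ,dρ) = δ₀(dλ)δ₁(dρ) + (1-λ)⁻¹ dλ δ₁(dρ) + δ₀(dλ) ρ⁻¹ dρ + 2(ρ-λ)⁻² dλ dρ`,
and `0 < w < u < 1`, the integral of `(ρ-λ)⁻¹ 1(0 ≤ λ < α < ρ ≤ 1) 1(λ < w < u < ρ)`
with respect to `ν` equals `[(α ∨ u) - (α ∧ w)]⁻¹`. -/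
theorem stmt_16 (α x y w u : ℝ)
    (hα0 : 0 ≤ α) (hα1 : α ≤ 1)
    (hx0 : 0 ≤ x) (hxα : x < α) (hαy : α < y) (hy1 : y ≤ 1)
    (hw0 : 0 < w) (hwu : w < u) (hu1 : u < 1) (hxw : x < w) (huy : u < y) :
    ∫ q : ℝ × ℝ,
        indicator {q : ℝ × ℝ | 0 ≤ q.1 ∧ q.1 < α ∧ α < q.2 ∧ q.2 ≤ 1
            ∧ q.1 < w ∧ u < q.2}
          (fun q => (q.2 - q.1)⁻¹) q
      ∂((Measure.dirac (0 : ℝ)).prod (Measure.dirac (1 : ℝ))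
        + (volume.withDensity (fun l : ℝ => ENNReal.ofReal (1 - l)⁻¹)).prod
            (Measure.dirac (1 : ℝ))
        + (Measure.dirac (0 : ℝ)).prod
            (volume.withDensity (fun r : ℝ => ENNReal.ofReal r⁻¹))
        + (volume : Measure (ℝ × ℝ)).withDensity
            (fun q : ℝ × ℝ => ENNReal.ofReal (2 * ((q.2 - q.1) ^ 2)⁻¹)))
      = (max α u - min α w)⁻¹ := by
  have hαpos : 0 < α := lt_of_le_of_lt hx0 hxα
  have hαlt1 : α < 1 := lt_of_lt_of_le hαy hy1
  set a : ℝ := min α w with ha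
  set b : ℝ := max α u with hbdef
  have ha0 : 0 < a := lt_min hαpos hw0
  have haw : a ≤ w := min_le_right _ _
  have hub : u ≤ b := le_max_right _ _
  have hb1 : b < 1 := max_lt hαlt1 hu1
  have hab : a < b := lt_of_le_of_lt haw (lt_of_lt_of_le hwu hub)
  have ha1 : a < 1 := lt_trans hab hb1
  have hb0 : 0 < b := lt_trans ha0 hab
  have hset : {q : ℝ × ℝ | 0 ≤ q.1 ∧ q.1 < α ∧ α < q.2 ∧ q.2 ≤ 1 ∧ q.1 < w ∧ u < q.2}
      = Ico 0 a ×ˢ Ioc b 1 := by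
    ext q
    simp only [mem_setOf_eq, mem_prod, mem_Ico, mem_Ioc, ha, hbdef, lt_min_iff, max_lt_iff]
    tauto
  rw [hset]
  set f : ℝ × ℝ → ℝ := (Ico 0 a ×ˢ Ioc b 1).indicator (fun q => (q.2 - q.1)⁻¹) with hfdef
  have hsm : MeasurableSet (Ico 0 a ×ˢ Ioc b 1) := measurableSet_Ico.prod measurableSet_Ioc
  have hfm : Measurable f := (measurable_snd.sub measurable_fst).inv.indicator hsm
  -- density measurability
  have hD2 : Measurable fun l : ℝ => Real.toNNReal ((1 - l)⁻¹) :=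
    ((measurable_const.sub measurable_id).inv).real_toNNReal
  have hD3 : Measurable fun r : ℝ => Real.toNNReal r⁻¹ := measurable_inv.real_toNNReal
  have hD4 : Measurable fun q : ℝ × ℝ => Real.toNNReal (2 * ((q.2 - q.1) ^ 2)⁻¹) :=
    (measurable_const.mul ((measurable_snd.sub measurable_fst).pow_const 2).inv).real_toNNReal
  have hofReal2 : (fun l : ℝ => ENNReal.ofReal (1 - l)⁻¹)
      = fun l : ℝ => ((Real.toNNReal ((1 - l)⁻¹) : ℝ≥0) : ℝ≥0∞) := rfl
  have hofReal3 : (fun r : ℝ => ENNReal.ofReal r⁻¹)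
      = fun r : ℝ => ((Real.toNNReal r⁻¹ : ℝ≥0) : ℝ≥0∞) := rfl
  have hofReal4 : (fun q : ℝ × ℝ => ENNReal.ofReal (2 * ((q.2 - q.1) ^ 2)⁻¹))
      = fun q : ℝ × ℝ => ((Real.toNNReal (2 * ((q.2 - q.1) ^ 2)⁻¹) : ℝ≥0) : ℝ≥0∞) := rfl
  -- rewritten integrands
  have hg2 : (fun l : ℝ => (Real.toNNReal ((1 - l)⁻¹) : ℝ≥0) • f (l, 1))
      = (Ico 0 a).indicator (fun l => ((1 - l) ^ 2)⁻¹) := by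
    funext l
    by_cases hl : l ∈ Ico 0 a
    · have hmem : ((l : ℝ), (1 : ℝ)) ∈ Ico 0 a ×ˢ Ioc b 1 := ⟨hl, hb1, le_refl 1⟩
      have hl1 : l < 1 := lt_trans hl.2 ha1
      have hpos : (0:ℝ) ≤ (1 - l)⁻¹ := by
        have : (0:ℝ) < 1 - l := by linarith
        positivity
      simp only [hfdef, indicator_of_mem hmem, indicator_of_mem hl]
      rw [NNReal.smul_def, Real.coe_toNNReal _ hpos, smul_eq_mul, sq, mul_inv]
    · have hmem : ((l : ℝ), (1 : ℝ)) ∉ Ico 0 a ×ˢ Ioc b 1 := by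
        intro hc; exact hl hc.1
      simp [hfdef, indicator_of_notMem hmem, indicator_of_notMem hl]
  have hg3 : (fun r : ℝ => (Real.toNNReal r⁻¹ : ℝ≥0) • f (0, r))
      = (Ioc b 1).indicator (fun r => (r ^ 2)⁻¹) := by
    funext r
    by_cases hr : r ∈ Ioc b 1
    · have hmem : ((0 : ℝ), r) ∈ Ico 0 a ×ˢ Ioc b 1 := ⟨⟨le_refl 0, ha0⟩, hr⟩
      have hr0 : 0 < r := lt_trans hb0 hr.1
      have hpos : (0:ℝ) ≤ r⁻¹ := by positivity
      simp only [hfdef, indicator_of_mem hmem, indicator_of_mem hr]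
      rw [NNReal.smul_def, Real.coe_toNNReal _ hpos, smul_eq_mul, sub_zero, sq, mul_inv]
    · have hmem : ((0 : ℝ), r) ∉ Ico 0 a ×ˢ Ioc b 1 := by
        intro hc; exact hr hc.2
      simp [hfdef, indicator_of_notMem hmem, indicator_of_notMem hr]
  have hg4 : (fun q : ℝ × ℝ => (Real.toNNReal (2 * ((q.2 - q.1) ^ 2)⁻¹) : ℝ≥0) • f q)
      = (Ico 0 a ×ˢ Ioc b 1).indicator
          (fun q => 2 * (((q.2 - q.1) ^ 2)⁻¹ * (q.2 - q.1)⁻¹)) := by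
    funext q
    by_cases hq : q ∈ Ico 0 a ×ˢ Ioc b 1
    · have hd : (0:ℝ) < q.2 - q.1 := by
        have h1 : q.1 < a := hq.1.2
        have h2 : b < q.2 := hq.2.1
        linarith
      have hpos : (0:ℝ) ≤ 2 * ((q.2 - q.1) ^ 2)⁻¹ := by positivity
      simp only [hfdef, indicator_of_mem hq]
      rw [NNReal.smul_def, Real.coe_toNNReal _ hpos, smul_eq_mul]
      ring
    · simp [hfdef, indicator_of_notMem hq]
  -- integrability of the rewritten indicators
  have hint2 : Integrable ((Ico 0 a).indicator (fun l : ℝ => ((1 - l) ^ 2)⁻¹)) volume := by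
    apply IntegrableOn.integrable_indicator _ measurableSet_Ico
    apply IntegrableOn.mono_set _ Ico_subset_Icc_self
    apply ContinuousOn.integrableOn_compact isCompact_Icc
    apply ContinuousOn.inv₀ (((continuous_const.sub continuous_id).pow 2).continuousOn)
    intro t ht
    have : t < 1 := lt_of_le_of_lt ht.2 ha1
    have h0 : (0:ℝ) < 1 - t := by linarith
    simp only [Pi.pow_apply, Pi.sub_apply, id]; positivity
  have hint3 : Integrable ((Ioc b 1).indicator (fun r : ℝ => (r ^ 2)⁻¹)) volume := by
    apply IntegrableOn.integrable_indicator _ measurableSet_Ioc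
    apply IntegrableOn.mono_set _ Ioc_subset_Icc_self
    apply ContinuousOn.integrableOn_compact isCompact_Icc
    apply ContinuousOn.inv₀ ((continuous_id.pow 2).continuousOn)
    intro t ht
    have : 0 < t := lt_of_lt_of_le hb0 ht.1
    simp only [Pi.pow_apply, Pi.sub_apply, id]; positivity
  have hi4on : IntegrableOn (fun q : ℝ × ℝ => 2 * (((q.2 - q.1) ^ 2)⁻¹ * (q.2 - q.1)⁻¹))
      (Ico 0 a ×ˢ Ioc b 1) volume := by
    apply IntegrableOn.mono_set _ (prod_mono Ico_subset_Icc_self Ioc_subset_Icc_self)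
    apply ContinuousOn.integrableOn_compact (isCompact_Icc.prod isCompact_Icc)
    have hc : ContinuousOn (fun q : ℝ × ℝ => q.2 - q.1) (Icc 0 a ×ˢ Icc b 1) :=
      (continuous_snd.sub continuous_fst).continuousOn
    have hne : ∀ q ∈ Icc (0:ℝ) a ×ˢ Icc b 1, q.2 - q.1 ≠ 0 := by
      intro q hq
      have h1 : q.1 ≤ a := hq.1.2
      have h2 : b ≤ q.2 := hq.2.1
      have : (0:ℝ) < q.2 - q.1 := by linarith
      linarith
    exact continuousOn_const.mul (((hc.pow 2).inv₀ fun q hq => pow_ne_zero 2 (hne q hq)).mul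
      (hc.inv₀ hne))
  have hint4 : Integrable ((Ico 0 a ×ˢ Ioc b 1).indicator
      (fun q : ℝ × ℝ => 2 * (((q.2 - q.1) ^ 2)⁻¹ * (q.2 - q.1)⁻¹))) volume :=
    hi4on.integrable_indicator hsm
  -- Integrability wrt each of the four measures
  have i1 : Integrable f ((Measure.dirac ((0:ℝ))).prod (Measure.dirac (1:ℝ))) := by
    rw [Measure.dirac_prod_dirac]
    refine ⟨hfm.aestronglyMeasurable, ?_⟩
    simp [HasFiniteIntegral, lintegral_dirac]
  have i2 : Integrable f ((volume.withDensity (fun l : ℝ => ENNReal.ofReal (1 - l)⁻¹)).prod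
      (Measure.dirac (1:ℝ))) := by
    rw [Measure.prod_dirac, (measurableEmbedding_prod_mk_right (1:ℝ)).integrable_map_iff,
      hofReal2, integrable_withDensity_iff_integrable_smul hD2]
    simp only [Function.comp_def]
    rw [hg2]
    exact hint2
  have i3 : Integrable f ((Measure.dirac (0:ℝ)).prod
      (volume.withDensity (fun r : ℝ => ENNReal.ofReal r⁻¹))) := by
    rw [Measure.dirac_prod, (measurableEmbedding_prodMk_left (0:ℝ)).integrable_map_iff,
      hofReal3, integrable_withDensity_iff_integrable_smul hD3]
    simp only [Function.comp_def]
    rw [hg3]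
    exact hint3
  have i4 : Integrable f ((volume : Measure (ℝ × ℝ)).withDensity
      (fun q : ℝ × ℝ => ENNReal.ofReal (2 * ((q.2 - q.1) ^ 2)⁻¹))) := by
    rw [hofReal4, integrable_withDensity_iff_integrable_smul hD4, hg4]
    exact hint4
  rw [integral_add_measure ((i1.add_measure i2).add_measure i3) i4,
    integral_add_measure (i1.add_measure i2) i3, integral_add_measure i1 i2]
  -- piece 1
  have e1 : ∫ q, f q ∂((Measure.dirac ((0:ℝ))).prod (Measure.dirac (1:ℝ))) = 1 := by
    rw [Measure.dirac_prod_dirac, integral_dirac]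
    have hmem : ((0 : ℝ), (1 : ℝ)) ∈ Ico 0 a ×ˢ Ioc b 1 := ⟨⟨le_refl 0, ha0⟩, hb1, le_refl 1⟩
    simp [hfdef, indicator_of_mem hmem]
  -- piece 2
  have e2 : ∫ q, f q ∂((volume.withDensity (fun l : ℝ => ENNReal.ofReal (1 - l)⁻¹)).prod
      (Measure.dirac (1:ℝ))) = (1 - a)⁻¹ - 1 := by
    rw [Measure.prod_dirac,
      integral_map (measurableEmbedding_prod_mk_right (1:ℝ)).measurable.aemeasurable
        hfm.aestronglyMeasurable, hofReal2, integral_withDensity_eq_integral_smul hD2, hg2,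
      integral_indicator measurableSet_Ico, integral_Ico_eq_integral_Ioo,
      ← integral_Ioc_eq_integral_Ioo, ← intervalIntegral.integral_of_le ha0.le,
      intInt1 1 0 a one_pos ha1]
    norm_num
  -- piece 3
  have e3 : ∫ q, f q ∂((Measure.dirac (0:ℝ)).prod
      (volume.withDensity (fun r : ℝ => ENNReal.ofReal r⁻¹))) = b⁻¹ - 1 := by
    rw [Measure.dirac_prod,
      integral_map (measurableEmbedding_prodMk_left (0:ℝ)).measurable.aemeasurable
        hfm.aestronglyMeasurable, hofReal3, integral_withDensity_eq_integral_smul hD3, hg3,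
      integral_indicator measurableSet_Ioc, ← intervalIntegral.integral_of_le hb1.le,
      intInt2 b 1 hb0 one_pos]
    norm_num
  -- piece 4
  have e4 : ∫ q, f q ∂((volume : Measure (ℝ × ℝ)).withDensity
      (fun q : ℝ × ℝ => ENNReal.ofReal (2 * ((q.2 - q.1) ^ 2)⁻¹)))
      = ((b - a)⁻¹ - b⁻¹) - ((1 - a)⁻¹ - 1) := by
    rw [hofReal4, integral_withDensity_eq_integral_smul hD4, hg4, integral_indicator hsm]
    have hi4on' : IntegrableOn (fun q : ℝ × ℝ => 2 * (((q.2 - q.1) ^ 2)⁻¹ * (q.2 - q.1)⁻¹))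
        (Ico 0 a ×ˢ Ioc b 1) (volume.prod volume) := by
      rwa [← Measure.volume_eq_prod]
    rw [Measure.volume_eq_prod, setIntegral_prod _ hi4on']
    have hinner : EqOn (fun l : ℝ => ∫ r in Ioc b 1, 2 * (((r - l) ^ 2)⁻¹ * (r - l)⁻¹))
        (fun l : ℝ => ((b - l) ^ 2)⁻¹ - ((1 - l) ^ 2)⁻¹) (Ico 0 a) := by
      intro l hl
      have hlb : l < b := lt_trans hl.2 hab
      have hl1 : l < 1 := lt_trans hlb hb1
      simp only
      rw [← intervalIntegral.integral_of_le hb1.le, intInt3 l b 1 hlb hl1]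
    rw [setIntegral_congr_fun measurableSet_Ico hinner, integral_Ico_eq_integral_Ioo,
      ← integral_Ioc_eq_integral_Ioo, ← intervalIntegral.integral_of_le ha0.le]
    have hii1 : IntervalIntegrable (fun l : ℝ => ((b - l) ^ 2)⁻¹) volume 0 a := by
      apply ContinuousOn.intervalIntegrable
      apply ContinuousOn.inv₀ (((continuous_const.sub continuous_id).pow 2).continuousOn)
      intro t ht
      have h1 : t ≤ max 0 a := ht.2
      have h2 : max 0 a = a := max_eq_right ha0.le
      have : t < b := by rw [h2] at h1; linarith
      have h0 : (0:ℝ) < b - t := by linarith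
      simp only [Pi.pow_apply, Pi.sub_apply, id]; positivity
    have hii2 : IntervalIntegrable (fun l : ℝ => ((1 - l) ^ 2)⁻¹) volume 0 a := by
      apply ContinuousOn.intervalIntegrable
      apply ContinuousOn.inv₀ (((continuous_const.sub continuous_id).pow 2).continuousOn)
      intro t ht
      have h1 : t ≤ max 0 a := ht.2
      have h2 : max 0 a = a := max_eq_right ha0.le
      have : t < 1 := by rw [h2] at h1; linarith
      have h0 : (0:ℝ) < 1 - t := by linarith
      simp only [Pi.pow_apply, Pi.sub_apply, id]; positivity
    rw [intervalIntegral.integral_sub hii1 hii2, intInt1 b 0 a hb0 hab,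
      intInt1 1 0 a one_pos ha1]
    norm_num
  rw [e1, e2, e3, e4]
  have hba : b - a ≠ 0 := by
    have : (0:ℝ) < b - a := by linarith
    linarith
  ring
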